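/- arXiv:1901.10217 — 3 statements merged into one kernel-verified Lean document; each statement's English description precedes it below -/
import Mathlib

section
/- For l > 0, the integral of the function λ ↦ (1/(λ(1+λ²))) e^{-l/λ²} over (0,∞) equals E₁(l)·e^{l}/2, where E₁(x) = ∫_x^∞ e^{-t}/t dt is the exponential integral of order 1. -/
open Real MeasureTheory Set

/-- The exponential integral of order 1. -/
noncomputable def E1 (x : ℝ) : ℝ := ∫ t in Ioi x, Real.exp (-t) / t

theorem integral_horseshoe_local_density (l : ℝ) (hl : 0 < l) :
    ∫ lam in Ioi (0 : ℝ), Real.exp (-l / lam ^ 2) / (lam * (1 + lam ^ 2)) =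
      E1 l * Real.exp l / 2 := by
  set f : ℝ → ℝ := fun lam => l + l / lam ^ 2 with hfdef
  set f' : ℝ → ℝ := fun lam => -2 * l / lam ^ 3 with hf'def
  have himg : f '' Ioi 0 = Ioi l := by
    ext t
    constructor
    · rintro ⟨lam, hlam, rfl⟩
      have hlam' : (0:ℝ) < lam := hlam
      have : 0 < l / lam ^ 2 := div_pos hl (by positivity)
      simp only [f, mem_Ioi]
      linarith
    · intro ht
      have ht' : l < t := ht
      have htl : (0:ℝ) < t - l := by linarith
      refine ⟨Real.sqrt (l / (t - l)), ?_, ?_⟩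
      · exact Real.sqrt_pos.mpr (div_pos hl htl)
      · have h1 : Real.sqrt (l / (t - l)) ^ 2 = l / (t - l) :=
          Real.sq_sqrt (le_of_lt (div_pos hl htl))
        simp only [f, h1]
        have : l / (l / (t - l)) = t - l := by
          field_simp
        rw [this]; ring
  have hderiv : ∀ x ∈ Ioi (0:ℝ), HasDerivWithinAt f (f' x) (Ioi 0) x := by
    intro x hx
    have hx0 : x ≠ 0 := ne_of_gt hx
    have h : HasDerivAt (fun y : ℝ => l + l / y ^ 2)
        (0 + (0 * x ^ 2 - l * (↑2 * x ^ (2 - 1))) / (x ^ 2) ^ 2) x :=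
      (hasDerivAt_const x l).add
        ((hasDerivAt_const x l).div (hasDerivAt_pow 2 x) (pow_ne_zero 2 hx0))
    have h2 : (0 + (0 * x ^ 2 - l * (↑2 * x ^ (2 - 1))) / (x ^ 2) ^ 2) = f' x := by
      simp only [hf'def]
      field_simp
      ring
    rw [h2] at h
    exact h.hasDerivWithinAt
  have hinj : InjOn f (Ioi 0) := by
    intro a ha b hb hab
    have ha' : (0:ℝ) < a := ha
    have hb' : (0:ℝ) < b := hb
    simp only [f] at hab
    have hdiv : l / a ^ 2 = l / b ^ 2 := by linarith
    field_simp at hdiv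
    exact (pow_left_inj₀ ha'.le hb'.le two_ne_zero).mp (by linarith)
  have key := integral_image_eq_integral_abs_deriv_smul measurableSet_Ioi hderiv hinj
    (fun t => Real.exp (-t) / t)
  rw [himg] at key
  have hEq : ∀ x ∈ Ioi (0:ℝ), |f' x| • (Real.exp (-(f x)) / f x) =
      (2 * Real.exp (-l)) * (Real.exp (-l / x ^ 2) / (x * (1 + x ^ 2))) := by
    intro x hx
    have hx0 : (0:ℝ) < x := hx
    have hfx : 0 < l + l / x ^ 2 := by positivity
    simp only [f, f', smul_eq_mul]
    rw [abs_of_nonpos (by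
      apply div_nonpos_of_nonpos_of_nonneg
      · linarith
      · positivity)]
    rw [neg_add, Real.exp_add, neg_div]
    rw [show -(-2 * l / x ^ 3) = 2 * l / x ^ 3 by ring]
    field_simp
    ring
  calc ∫ lam in Ioi (0:ℝ), Real.exp (-l / lam ^ 2) / (lam * (1 + lam ^ 2))
      = (∫ t in Ioi l, Real.exp (-t) / t) * Real.exp l / 2 := by
        rw [key, setIntegral_congr_fun measurableSet_Ioi hEq, integral_const_mul]
        rw [Real.exp_neg]
        have hE := Real.exp_pos l
        field_simp
    _ = E1 l * Real.exp l / 2 := rfl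
end

section
/- Let l > 0 and let λ be a random variable on (0,∞) with density proportional to λ ↦ e^{-l/λ²}/(λ(1+λ²)). Then the expectation of z = λ^{-2} equals 1/(l·e^{l}·E₁(l)) − 1, where E₁ is the exponential integral of order 1. -/
open Real MeasureTheory Set

/-- Unnormalized density of λ. -/
noncomputable def fl (l lam : ℝ) : ℝ :=
  Real.exp (-l / lam ^ 2) / (lam * (1 + lam ^ 2))

/-- Substitution `x ↦ x⁻²` mapping `(0,∞)` onto itself. -/
lemma integral_comp_inv_sq (g : ℝ → ℝ) :
    ∫ u in Ioi (0:ℝ), g u = ∫ x in Ioi (0:ℝ), (2 * x ^ (-3 : ℤ)) * g (x ^ (-2 : ℤ)) := by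
  have hder : ∀ x ∈ Ioi (0:ℝ), HasDerivWithinAt (fun x : ℝ => x ^ (-2 : ℤ))
      ((-2 : ℝ) * x ^ (-3 : ℤ)) (Ioi 0) x := by
    intro x hx
    simpa using (hasDerivAt_zpow (-2) x (Or.inl (ne_of_gt hx))).hasDerivWithinAt
  have hinj : InjOn (fun x : ℝ => x ^ (-2 : ℤ)) (Ioi 0) := by
    intro x hx y hy h
    simp only [zpow_neg, inv_inj] at h
    have hx0 : (0:ℝ) < x := hx
    have hy0 : (0:ℝ) < y := hy
    have h2 : x ^ (2:ℕ) = y ^ (2:ℕ) := by exact_mod_cast h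
    calc x = Real.sqrt (x ^ 2) := (Real.sqrt_sq hx0.le).symm
    _ = Real.sqrt (y ^ 2) := by rw [h2]
    _ = y := Real.sqrt_sq hy0.le
  have himg : (fun x : ℝ => x ^ (-2 : ℤ)) '' Ioi 0 = Ioi 0 := by
    ext t
    constructor
    · rintro ⟨x, hx, rfl⟩
      have : (0:ℝ) < x := hx
      exact zpow_pos this _
    · intro ht
      have ht' : (0:ℝ) < t := ht
      have hst : (0:ℝ) < Real.sqrt t := Real.sqrt_pos.mpr ht'
      refine ⟨(Real.sqrt t)⁻¹, inv_pos.mpr hst, ?_⟩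
      show ((Real.sqrt t)⁻¹) ^ (-2 : ℤ) = t
      rw [zpow_neg, inv_zpow, inv_inv]
      have := Real.sq_sqrt ht'.le
      simpa [zpow_two, sq] using this
  have := integral_image_eq_integral_abs_deriv_smul measurableSet_Ioi hder hinj g
  rw [himg] at this
  rw [this]
  refine setIntegral_congr_fun measurableSet_Ioi ?_
  intro x hx
  have hx0 : (0:ℝ) < x := hx
  simp only [smul_eq_mul]
  rw [abs_mul, abs_of_nonneg (zpow_nonneg hx0.le (-3 : ℤ))]
  norm_num

lemma integrable_exp_mul (l : ℝ) (hl : 0 < l) :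
    IntegrableOn (fun u : ℝ => Real.exp (-(l * u))) (Ioi 0) := by
  simpa [neg_mul] using exp_neg_integrableOn_Ioi 0 hl

lemma integrable_exp_div (l : ℝ) (hl : 0 < l) :
    IntegrableOn (fun u : ℝ => Real.exp (-(l * u)) / (1 + u)) (Ioi 0) := by
  refine Integrable.mono (integrable_exp_mul l hl) ?_ ?_
  · apply Measurable.aestronglyMeasurable
    exact (Real.measurable_exp.comp (measurable_const.mul measurable_id).neg).div
      (measurable_const.add measurable_id)
  · filter_upwards [ae_restrict_mem measurableSet_Ioi] with u hu
    have hu0 : (0:ℝ) < u := hu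
    rw [Real.norm_eq_abs, Real.norm_eq_abs, abs_of_nonneg (Real.exp_pos _).le,
      abs_of_nonneg (by positivity)]
    rw [div_le_iff₀ (by linarith)]
    nlinarith [Real.exp_pos (-(l*u))]

lemma integrable_E1 (l : ℝ) (hl : 0 < l) :
    IntegrableOn (fun t : ℝ => Real.exp (-t) / t) (Ioi l) := by
  have hbase : IntegrableOn (fun t : ℝ => l⁻¹ * Real.exp (-t)) (Ioi l) :=
    Integrable.const_mul (by have h := exp_neg_integrableOn_Ioi l one_pos; simp only [neg_mul, one_mul] at h; exact h) _
  refine Integrable.mono hbase ?_ ?_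
  · apply Measurable.aestronglyMeasurable
    exact (Real.measurable_exp.comp measurable_neg).div measurable_id
  · filter_upwards [ae_restrict_mem measurableSet_Ioi] with t ht
    have ht0 : l < t := ht
    have ht0' : (0:ℝ) < t := hl.trans ht0
    rw [Real.norm_eq_abs, Real.norm_eq_abs, abs_of_nonneg (by positivity),
      abs_of_nonneg (by positivity)]
    rw [div_le_iff₀ ht0']
    have h1 : Real.exp (-t) * l ≤ Real.exp (-t) * t := by
      nlinarith [Real.exp_pos (-t)]
    calc Real.exp (-t) = l⁻¹ * (Real.exp (-t) * l) := by field_simp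
    _ ≤ l⁻¹ * (Real.exp (-t) * t) := by
        apply mul_le_mul_of_nonneg_left h1 (by positivity)
    _ = l⁻¹ * Real.exp (-t) * t := by ring

lemma E1_pos (l : ℝ) (hl : 0 < l) : 0 < E1 l := by
  rw [E1]
  rw [setIntegral_pos_iff_support_of_nonneg_ae ?_ (integrable_E1 l hl)]
  · refine lt_of_lt_of_le ?_ (measure_mono (?_ : Ioi l ⊆ _))
    · rw [Real.volume_Ioi]; exact ENNReal.zero_lt_top
    · intro t ht
      have : (0:ℝ) < t := hl.trans ht
      exact ⟨Function.mem_support.mpr (by positivity), ht⟩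
  · filter_upwards [ae_restrict_mem measurableSet_Ioi] with t ht
    have : (0:ℝ) < t := hl.trans ht
    positivity

/-- Affine substitution: `∫_{(0,∞)} e^{-lu}/(1+u) du = e^l E1 l`. -/
lemma integral_exp_div_eq (l : ℝ) (hl : 0 < l) :
    ∫ u in Ioi (0:ℝ), Real.exp (-(l * u)) / (1 + u) = Real.exp l * E1 l := by
  have hder : ∀ u ∈ Ioi (0:ℝ), HasDerivWithinAt (fun u : ℝ => l * (1 + u)) l (Ioi 0) u := by
    intro u hu
    simpa using (((hasDerivAt_id u).const_add 1).const_mul l).hasDerivWithinAt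
  have hinj : InjOn (fun u : ℝ => l * (1 + u)) (Ioi 0) := by
    intro x _ y _ h
    simp only at h
    have := mul_left_cancel₀ (ne_of_gt hl) h
    linarith
  have himg : (fun u : ℝ => l * (1 + u)) '' Ioi 0 = Ioi l := by
    ext t
    constructor
    · rintro ⟨u, hu, rfl⟩
      have : (0:ℝ) < u := hu
      have : l * 1 < l * (1 + u) := by nlinarith
      simpa using this
    · intro ht
      have ht' : l < t := ht
      refine ⟨t / l - 1, ?_, ?_⟩
      · simp only [mem_Ioi]
        rw [sub_pos, lt_div_iff₀ hl]; linarith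
      · field_simp
        ring
  have := integral_image_eq_integral_abs_deriv_smul measurableSet_Ioi hder hinj
    (fun t : ℝ => Real.exp (-t) / t)
  rw [himg] at this
  rw [E1, this]
  rw [← integral_const_mul]
  refine setIntegral_congr_fun measurableSet_Ioi ?_
  intro u hu
  have hu0 : (0:ℝ) < u := hu
  simp only [smul_eq_mul]
  rw [abs_of_pos hl]
  have he : Real.exp (-(l*(1+u))) = Real.exp (-l) * Real.exp (-(l*u)) := by
    rw [← Real.exp_add]; ring_nf
  have h1u : (0:ℝ) < 1 + u := by linarith
  rw [he, Real.exp_neg]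
  have hel : Real.exp l ≠ 0 := (Real.exp_pos l).ne'
  have hme : Real.exp l * Real.exp (-l) = 1 := by rw [← Real.exp_add]; simp
  field_simp
  linear_combination (-1) * hme

lemma Z_eq (l : ℝ) (hl : 0 < l) :
    ∫ lam in Ioi (0:ℝ), fl l lam = Real.exp l * E1 l / 2 := by
  have key := integral_comp_inv_sq (fun u => Real.exp (-(l * u)) / (1 + u))
  have hpt : ∀ x ∈ Ioi (0:ℝ),
      (2 * x ^ (-3 : ℤ)) * (Real.exp (-(l * x ^ (-2 : ℤ))) / (1 + x ^ (-2 : ℤ)))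
        = 2 * fl l x := by
    intro x hx
    have hx0 : (0:ℝ) < x := hx
    have hz2 : x ^ (-2 : ℤ) = (x ^ 2)⁻¹ := by
      rw [zpow_neg]; norm_cast
    have hz3 : x ^ (-3 : ℤ) = (x ^ 3)⁻¹ := by
      rw [zpow_neg]; norm_cast
    rw [hz2, hz3, fl]
    have harg : -(l * (x ^ 2)⁻¹) = -l / x ^ 2 := by ring
    rw [harg]
    have hx2 : (0:ℝ) < x ^ 2 := by positivity
    field_simp
    ring
  rw [setIntegral_congr_fun measurableSet_Ioi hpt, integral_const_mul] at key
  have h2 : ∫ lam in Ioi (0:ℝ), fl l lam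
      = (∫ u in Ioi (0:ℝ), Real.exp (-(l * u)) / (1 + u)) / 2 := by
    rw [key]; ring
  rw [h2, integral_exp_div_eq l hl]

lemma N_eq (l : ℝ) (hl : 0 < l) :
    ∫ lam in Ioi (0:ℝ), lam ^ (-2 : ℤ) * fl l lam
      = (1 / l - Real.exp l * E1 l) / 2 := by
  have key := integral_comp_inv_sq (fun u => u * Real.exp (-(l * u)) / (1 + u))
  have hpt : ∀ x ∈ Ioi (0:ℝ),
      (2 * x ^ (-3 : ℤ)) * ((x ^ (-2 : ℤ)) * Real.exp (-(l * x ^ (-2 : ℤ))) / (1 + x ^ (-2 : ℤ)))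
        = 2 * (x ^ (-2 : ℤ) * fl l x) := by
    intro x hx
    have hx0 : (0:ℝ) < x := hx
    have hz2 : x ^ (-2 : ℤ) = (x ^ 2)⁻¹ := by
      rw [zpow_neg]; norm_cast
    have hz3 : x ^ (-3 : ℤ) = (x ^ 3)⁻¹ := by
      rw [zpow_neg]; norm_cast
    rw [hz2, hz3, fl]
    have harg : -(l * (x ^ 2)⁻¹) = -l / x ^ 2 := by ring
    rw [harg]
    have hx2 : (0:ℝ) < x ^ 2 := by positivity
    field_simp
    ring
  rw [setIntegral_congr_fun measurableSet_Ioi hpt, integral_const_mul] at key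
  have hsplit : ∫ u in Ioi (0:ℝ), u * Real.exp (-(l * u)) / (1 + u)
      = (∫ u in Ioi (0:ℝ), Real.exp (-(l * u)))
        - ∫ u in Ioi (0:ℝ), Real.exp (-(l * u)) / (1 + u) := by
    rw [← integral_sub (integrable_exp_mul l hl) (integrable_exp_div l hl)]
    refine setIntegral_congr_fun measurableSet_Ioi ?_
    intro u hu
    have hu0 : (0:ℝ) < u := hu
    have h1u : (0:ℝ) < 1 + u := by linarith
    field_simp
    ring
  have hexp : ∫ u in Ioi (0:ℝ), Real.exp (-(l * u)) = 1 / l := by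
    have := integral_comp_mul_left_Ioi (fun x : ℝ => Real.exp (-x)) 0 hl
    simp only [mul_zero, smul_eq_mul] at this
    rw [this, integral_exp_neg_Ioi]
    simp [one_div]
  rw [hsplit, hexp, integral_exp_div_eq l hl] at key
  linarith [key]

/-- The expectation of `z = λ⁻²` under the density proportional to
`λ ↦ exp (-l/λ²)/(λ(1+λ²))` on `(0,∞)` equals `1/(l e^l E₁(l)) - 1`. -/
theorem expectation_inv_sq_horseshoe_local (l : ℝ) (hl : 0 < l) :
    (∫ lam in Ioi (0 : ℝ), lam ^ (-2 : ℤ) * fl l lam) /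
      (∫ lam in Ioi (0 : ℝ), fl l lam) =
      1 / (l * Real.exp l * E1 l) - 1 := by
  rw [Z_eq l hl, N_eq l hl]
  have hE : 0 < E1 l := E1_pos l hl
  have hA : (0:ℝ) < Real.exp l * E1 l := by positivity
  have hl' : l ≠ 0 := hl.ne'
  have hA' : Real.exp l * E1 l ≠ 0 := hA.ne'
  field_simp
end

section
/- The horseshoe prior density π_τ(β) = ∫_0^∞ φ(β; 0, τ²λ²) · (2/(π(1+λ²))) dλ, where φ(·;0,v) is the normal density with variance v, satisfies π_τ(β) → ∞ as β → 0; that is, the horseshoe density has an infinite spike at zero. -/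
open Real MeasureTheory Set Filter Topology

/-- The horseshoe prior density with scale `τ`. -/
noncomputable def horseshoeDensity (τ β : ℝ) : ℝ :=
  ∫ lam in Ioi (0 : ℝ),
    (1 / Real.sqrt (2 * Real.pi * (τ ^ 2 * lam ^ 2))) *
      Real.exp (-β ^ 2 / (2 * (τ ^ 2 * lam ^ 2))) * (2 / (Real.pi * (1 + lam ^ 2)))

lemma hs_sqrt_eq (τ : ℝ) (hτ : 0 < τ) {lam : ℝ} (hl : 0 < lam) :
    Real.sqrt (2 * Real.pi * (τ ^ 2 * lam ^ 2)) = Real.sqrt (2 * Real.pi) * (τ * lam) := by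
  rw [show τ ^ 2 * lam ^ 2 = (τ * lam) ^ 2 by ring,
    Real.sqrt_mul (by positivity), Real.sqrt_sq (by positivity)]

lemma hs_integrable (τ β : ℝ) (hτ : 0 < τ) (hβ : β ≠ 0) :
    IntegrableOn (fun lam : ℝ =>
      (1 / Real.sqrt (2 * Real.pi * (τ ^ 2 * lam ^ 2))) *
        Real.exp (-β ^ 2 / (2 * (τ ^ 2 * lam ^ 2))) * (2 / (Real.pi * (1 + lam ^ 2))))
      (Ioi (0:ℝ)) := by
  have hmeas : Measurable (fun lam : ℝ =>
      (1 / Real.sqrt (2 * Real.pi * (τ ^ 2 * lam ^ 2))) *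
        Real.exp (-β ^ 2 / (2 * (τ ^ 2 * lam ^ 2))) * (2 / (Real.pi * (1 + lam ^ 2)))) := by
    fun_prop
  have hβ2 : 0 < β ^ 2 := by positivity
  have hπ : (0:ℝ) < Real.pi := Real.pi_pos
  have h1 : IntegrableOn (fun lam : ℝ =>
      (1 / Real.sqrt (2 * Real.pi * (τ ^ 2 * lam ^ 2))) *
        Real.exp (-β ^ 2 / (2 * (τ ^ 2 * lam ^ 2))) * (2 / (Real.pi * (1 + lam ^ 2))))
      (Ioc (0:ℝ) 1) := by
    refine Integrable.mono' (g := fun _ : ℝ => 4 * τ / (Real.sqrt (2 * Real.pi) * Real.pi * β ^ 2))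
      (integrableOn_const measure_Ioc_lt_top.ne) (hmeas.aestronglyMeasurable.restrict) ?_
    rw [ae_restrict_iff' measurableSet_Ioc]
    filter_upwards with lam hlam
    obtain ⟨hl0, hl1⟩ := hlam
    have hs := hs_sqrt_eq τ hτ hl0
    have hnn : (0:ℝ) ≤ (1 / Real.sqrt (2 * Real.pi * (τ ^ 2 * lam ^ 2))) *
        Real.exp (-β ^ 2 / (2 * (τ ^ 2 * lam ^ 2))) * (2 / (Real.pi * (1 + lam ^ 2))) := by
      positivity
    rw [Real.norm_eq_abs, abs_of_nonneg hnn, hs]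
    have hx : 0 < β ^ 2 / (2 * (τ ^ 2 * lam ^ 2)) := by positivity
    have hexp : Real.exp (-β ^ 2 / (2 * (τ ^ 2 * lam ^ 2))) ≤ 2 * (τ ^ 2 * lam ^ 2) / β ^ 2 := by
      rw [show -β ^ 2 / (2 * (τ ^ 2 * lam ^ 2)) = -(β ^ 2 / (2 * (τ ^ 2 * lam ^ 2))) by ring,
        Real.exp_neg]
      rw [show 2 * (τ ^ 2 * lam ^ 2) / β ^ 2 = (β ^ 2 / (2 * (τ ^ 2 * lam ^ 2)))⁻¹ by
        field_simp]
      apply inv_anti₀ hx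
      linarith [Real.add_one_le_exp (β ^ 2 / (2 * (τ ^ 2 * lam ^ 2)))]
    have hthird : 2 / (Real.pi * (1 + lam ^ 2)) ≤ 2 / Real.pi := by
      apply div_le_div_of_nonneg_left (by norm_num) hπ
      nlinarith
    calc (1 / (Real.sqrt (2 * Real.pi) * (τ * lam))) *
        Real.exp (-β ^ 2 / (2 * (τ ^ 2 * lam ^ 2))) * (2 / (Real.pi * (1 + lam ^ 2)))
        ≤ (1 / (Real.sqrt (2 * Real.pi) * (τ * lam))) *
          (2 * (τ ^ 2 * lam ^ 2) / β ^ 2) * (2 / Real.pi) := by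
          have hden : (0:ℝ) < Real.sqrt (2 * Real.pi) * (τ * lam) := by positivity
          gcongr
        _ = (4 * τ / (Real.sqrt (2 * Real.pi) * Real.pi * β ^ 2)) * lam := by
          have h2π : Real.sqrt (2 * Real.pi) ≠ 0 := by positivity
          field_simp
          ring
        _ ≤ 4 * τ / (Real.sqrt (2 * Real.pi) * Real.pi * β ^ 2) := by
          nth_rewrite 2 [show (4 * τ / (Real.sqrt (2 * Real.pi) * Real.pi * β ^ 2)) =
            (4 * τ / (Real.sqrt (2 * Real.pi) * Real.pi * β ^ 2)) * 1 by ring]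
          gcongr
  have h2 : IntegrableOn (fun lam : ℝ =>
      (1 / Real.sqrt (2 * Real.pi * (τ ^ 2 * lam ^ 2))) *
        Real.exp (-β ^ 2 / (2 * (τ ^ 2 * lam ^ 2))) * (2 / (Real.pi * (1 + lam ^ 2))))
      (Ioi (1:ℝ)) := by
    refine Integrable.mono' (g := fun lam : ℝ =>
        (2 / (Real.sqrt (2 * Real.pi) * τ * Real.pi)) * lam ^ (-3:ℝ))
      ((integrableOn_Ioi_rpow_of_lt (by norm_num) one_pos).const_mul _)
      (hmeas.aestronglyMeasurable.restrict) ?_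
    rw [ae_restrict_iff' measurableSet_Ioi]
    filter_upwards with lam hlam
    have hl0 : (0:ℝ) < lam := lt_trans one_pos hlam
    have hs := hs_sqrt_eq τ hτ hl0
    have hnn : (0:ℝ) ≤ (1 / Real.sqrt (2 * Real.pi * (τ ^ 2 * lam ^ 2))) *
        Real.exp (-β ^ 2 / (2 * (τ ^ 2 * lam ^ 2))) * (2 / (Real.pi * (1 + lam ^ 2))) := by
      positivity
    rw [Real.norm_eq_abs, abs_of_nonneg hnn, hs]
    have hexp : Real.exp (-β ^ 2 / (2 * (τ ^ 2 * lam ^ 2))) ≤ 1 := by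
      apply Real.exp_le_one_iff.2
      have : (0:ℝ) < 2 * (τ ^ 2 * lam ^ 2) := by positivity
      exact div_nonpos_of_nonpos_of_nonneg (neg_nonpos.mpr (by positivity)) this.le
    have hthird : 2 / (Real.pi * (1 + lam ^ 2)) ≤ 2 / (Real.pi * lam ^ 2) := by
      apply div_le_div_of_nonneg_left (by norm_num) (by positivity)
      nlinarith
    calc (1 / (Real.sqrt (2 * Real.pi) * (τ * lam))) *
        Real.exp (-β ^ 2 / (2 * (τ ^ 2 * lam ^ 2))) * (2 / (Real.pi * (1 + lam ^ 2)))
        ≤ (1 / (Real.sqrt (2 * Real.pi) * (τ * lam))) * 1 * (2 / (Real.pi * lam ^ 2)) := by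
          gcongr
        _ = (2 / (Real.sqrt (2 * Real.pi) * τ * Real.pi)) * lam ^ (-3:ℝ) := by
          rw [Real.rpow_neg hl0.le, show (3:ℝ) = ((3:ℕ):ℝ) by norm_num,
            Real.rpow_natCast]
          have h2π : Real.sqrt (2 * Real.pi) ≠ 0 := by positivity
          field_simp
  have := h1.union h2
  rwa [Ioc_union_Ioi_eq_Ioi zero_le_one] at this

lemma hs_lower (τ : ℝ) (hτ : 0 < τ) (β : ℝ) (hβ : β ≠ 0) (hβτ : |β| < τ) :
    (Real.exp (-(1/2)) / (Real.sqrt (2 * Real.pi) * τ * Real.pi)) * Real.log (τ / |β|)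
      ≤ horseshoeDensity τ β := by
  set c : ℝ := Real.exp (-(1/2)) / (Real.sqrt (2 * Real.pi) * τ * Real.pi) with hc
  have hπ : (0:ℝ) < Real.pi := Real.pi_pos
  have habs : 0 < |β| := abs_pos.2 hβ
  set a : ℝ := |β| / τ with ha
  have ha0 : 0 < a := by positivity
  have ha1 : a < 1 := (div_lt_one hτ).2 hβτ
  have hcpos : 0 < c := by positivity
  -- step 3 pointwise bound on Ioc a 1
  have hpt : ∀ lam ∈ Ioc a 1, c / lam ≤
      (1 / Real.sqrt (2 * Real.pi * (τ ^ 2 * lam ^ 2))) *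
        Real.exp (-β ^ 2 / (2 * (τ ^ 2 * lam ^ 2))) * (2 / (Real.pi * (1 + lam ^ 2))) := by
    intro lam hlam
    obtain ⟨hla, hl1⟩ := hlam
    have hl0 : 0 < lam := lt_trans ha0 hla
    rw [hs_sqrt_eq τ hτ hl0]
    have hβlam : |β| ≤ τ * lam := by
      rw [ha, div_lt_iff₀ hτ] at hla
      nlinarith
    have hexp : Real.exp (-(1/2)) ≤ Real.exp (-β ^ 2 / (2 * (τ ^ 2 * lam ^ 2))) := by
      apply Real.exp_le_exp.2
      rw [neg_div, neg_le_neg_iff,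
        div_le_div_iff₀ (show (0:ℝ) < 2 * (τ ^ 2 * lam ^ 2) by positivity)
          (show (0:ℝ) < 2 by norm_num)]
      nlinarith [sq_abs β, abs_nonneg β, mul_self_le_mul_self (abs_nonneg β) hβlam]
    have hthird : 1 / Real.pi ≤ 2 / (Real.pi * (1 + lam ^ 2)) := by
      rw [div_le_div_iff₀ hπ (show (0:ℝ) < Real.pi * (1 + lam ^ 2) by positivity)]
      have hlamsq : lam ^ 2 ≤ 1 := by nlinarith
      nlinarith [mul_le_mul_of_nonneg_left hlamsq hπ.le]
    calc c / lam = (1 / (Real.sqrt (2 * Real.pi) * (τ * lam))) * Real.exp (-(1/2)) *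
        (1 / Real.pi) := by
          rw [hc]
          have h2π : Real.sqrt (2 * Real.pi) ≠ 0 := by positivity
          field_simp
      _ ≤ _ := by
          have hA : (0:ℝ) ≤ 1 / (Real.sqrt (2 * Real.pi) * (τ * lam)) := by positivity
          gcongr
  -- integrability of c/lam
  have hint_inv : IntegrableOn (fun lam : ℝ => c / lam) (Ioc a 1) := by
    apply IntegrableOn.mono_set (t := Icc a 1) _ Ioc_subset_Icc_self
    apply ContinuousOn.integrableOn_Icc
    apply continuousOn_const.div continuousOn_id
    intro x hx
    exact ne_of_gt (lt_of_lt_of_le ha0 hx.1)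
  have hintf := hs_integrable τ β hτ hβ
  have hsub : Ioc a 1 ⊆ Ioi (0:ℝ) := fun x hx => lt_trans ha0 hx.1
  have hintf' : IntegrableOn (fun lam : ℝ =>
      (1 / Real.sqrt (2 * Real.pi * (τ ^ 2 * lam ^ 2))) *
        Real.exp (-β ^ 2 / (2 * (τ ^ 2 * lam ^ 2))) * (2 / (Real.pi * (1 + lam ^ 2))))
      (Ioc a 1) := hintf.mono_set hsub
  have step1 : ∫ lam in Ioc a 1, c / lam ≤ ∫ lam in Ioc a 1,
      (1 / Real.sqrt (2 * Real.pi * (τ ^ 2 * lam ^ 2))) *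
        Real.exp (-β ^ 2 / (2 * (τ ^ 2 * lam ^ 2))) * (2 / (Real.pi * (1 + lam ^ 2))) :=
    setIntegral_mono_on hint_inv hintf' measurableSet_Ioc hpt
  have step2 : ∫ lam in Ioc a 1,
      (1 / Real.sqrt (2 * Real.pi * (τ ^ 2 * lam ^ 2))) *
        Real.exp (-β ^ 2 / (2 * (τ ^ 2 * lam ^ 2))) * (2 / (Real.pi * (1 + lam ^ 2)))
      ≤ horseshoeDensity τ β := by
    apply setIntegral_mono_set hintf
    · filter_upwards with lam
      positivity
    · exact HasSubset.Subset.eventuallyLE hsub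
  have step0 : ∫ lam in Ioc a 1, c / lam = c * Real.log (τ / |β|) := by
    rw [← intervalIntegral.integral_of_le ha1.le]
    have : ∀ x : ℝ, c / x = c * (1 / x) := fun x => by ring
    simp_rw [this]
    rw [intervalIntegral.integral_const_mul, integral_one_div]
    · rw [show (1:ℝ)/a = τ / |β| by rw [ha]; field_simp]
    · rw [Set.uIcc_of_le ha1.le]
      intro h0
      exact absurd h0.1 (not_le.2 ha0)
  linarith

/-- The horseshoe density has an infinite spike at zero:
`π_τ(β) → ∞` as `β → 0`. -/
theorem horseshoeDensity_tendsto_atTop (τ : ℝ) (hτ : 0 < τ) :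
    Tendsto (horseshoeDensity τ) (𝓝[≠] (0 : ℝ)) atTop := by
  set c : ℝ := Real.exp (-(1/2)) / (Real.sqrt (2 * Real.pi) * τ * Real.pi) with hc
  have hπ : (0:ℝ) < Real.pi := Real.pi_pos
  have hcpos : 0 < c := by positivity
  have habs : Tendsto (fun β : ℝ => |β|) (𝓝[≠] (0:ℝ)) (𝓝[>] (0:ℝ)) := by
    apply tendsto_nhdsWithin_of_tendsto_nhds_of_eventually_within
    · have : Tendsto (fun β : ℝ => |β|) (𝓝 (0:ℝ)) (𝓝 |0|) :=
        continuous_abs.tendsto 0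
      simpa using this.mono_left nhdsWithin_le_nhds
    · filter_upwards [self_mem_nhdsWithin] with β hβ
      exact abs_pos.2 hβ
  have hg : Tendsto (fun β : ℝ => c * Real.log (τ / |β|)) (𝓝[≠] (0:ℝ)) atTop := by
    apply Tendsto.const_mul_atTop hcpos
    apply Real.tendsto_log_atTop.comp
    have h1 : Tendsto (fun x : ℝ => τ * x⁻¹) (𝓝[>] (0:ℝ)) atTop :=
      (tendsto_inv_nhdsGT_zero).const_mul_atTop hτ
    have := h1.comp habs
    simpa [Function.comp_def, div_eq_mul_inv] using this
  apply tendsto_atTop_mono' _ _ hg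
  have h1 : ∀ᶠ β : ℝ in 𝓝[≠] (0:ℝ), |β| < τ := by
    apply eventually_nhdsWithin_of_eventually_nhds
    have := eventually_abs_sub_lt (0:ℝ) hτ
    simpa using this
  filter_upwards [h1, self_mem_nhdsWithin] with β hβτ hβ
  exact hs_lower τ hτ β hβ hβτ
end
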